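/- For p = 2, the group defined by generators ρ₀,ρ₁,ρ₂ with relations ρᵢ² = (ρ₀ρ₁)⁴ = (ρ₁ρ₂)⁴ = (ρ₀ρ₂)² = 1 and (ρ₀ρ₁ρ₂ρ₁)^{2s} = 1 (the automorphism group of the torus map {4,4}_{(2s,0)}) is isomorphic to (D_s × D_s) ⋊ D₄ and has order 32s². -/
import Mathlib


set_option linter.unusedSectionVars false
set_option maxHeartbeats 1000000

namespace Stmt12Aux
open DihedralGroup

section Lift
variable {G : Type*} [Group G] {n : ℕ} [NeZero n] (t S : G)

lemma pow_val_add (ht : t ^ n = 1) (i j : ZMod n) :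
    t ^ (i + j).val = t ^ i.val * t ^ j.val := by
  rw [← pow_add]
  refine pow_eq_pow_iff_modEq.mpr ?_
  have hd : orderOf t ∣ n := orderOf_dvd_of_pow_eq_one ht
  have : (i + j).val ≡ i.val + j.val [MOD n] := by
    rw [ZMod.val_add]; exact Nat.mod_modEq _ _
  exact this.of_dvd hd

lemma conj_pow_aux (hS : S * S = 1) (hst : S * t * S = t⁻¹) (k : ℕ) :
    S * t ^ k * S = (t ^ k)⁻¹ := by
  induction k with
  | zero => simpa using hS
  | succ k ih =>
      have h1 : S * t ^ (k + 1) * S = (S * t ^ k * S) * (S * t * S) := by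
        have : (S * t ^ k * S) * (S * t * S) = S * t ^ k * (S * S) * t * S := by group
        rw [this, hS, mul_one, pow_succ, mul_assoc S _ t, ← mul_assoc]
      rw [h1, ih, hst, ← mul_inv_rev, ← pow_succ']

variable (ht : t ^ n = 1) (hS : S * S = 1) (hst : S * t * S = t⁻¹)

/-- Lift a dihedral-type pair of elements to a hom out of `DihedralGroup n`. -/
def dihedralLift : DihedralGroup n →* G where
  toFun x := match x with
    | .r i => t ^ i.val
    | .sr i => S * t ^ i.val
  map_one' := by
    show t ^ (0 : ZMod n).val = 1
    simp [ZMod.val_zero]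
  map_mul' x y := by
    have hneg : ∀ i : ZMod n, t ^ (-i).val = (t ^ i.val)⁻¹ := by
      intro i
      have h := pow_val_add t ht (-i) i
      rw [neg_add_cancel] at h
      simp only [ZMod.val_zero, pow_zero] at h
      exact eq_inv_of_mul_eq_one_left h.symm
    have hconj : ∀ i : ZMod n, S * t ^ i.val * S = (t ^ i.val)⁻¹ :=
      fun i => conj_pow_aux t S hS hst i.val
    have hmove : ∀ i : ZMod n, t ^ i.val * S = S * t ^ (-i).val := by
      intro i
      rw [hneg, ← hconj]
      calc t ^ i.val * S = (S * S) * t ^ i.val * S := by rw [hS, one_mul]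
        _ = S * (S * t ^ i.val * S) := by group
    cases x with
    | r i =>
      cases y with
      | r j => show t ^ (i + j).val = t ^ i.val * t ^ j.val; exact pow_val_add t ht i j
      | sr j =>
        show S * t ^ (j - i).val = t ^ i.val * (S * t ^ j.val)
        rw [← mul_assoc, hmove, mul_assoc, ← pow_val_add t ht]
        congr 2
        ring
    | sr i =>
      cases y with
      | r j =>
        show S * t ^ (i + j).val = S * t ^ i.val * t ^ j.val
        rw [mul_assoc, ← pow_val_add t ht]
      | sr j =>
        show t ^ (j - i).val = S * t ^ i.val * (S * t ^ j.val)
        symm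
        calc S * t ^ i.val * (S * t ^ j.val) = (S * t ^ i.val * S) * t ^ j.val := by group
          _ = t ^ (-i).val * t ^ j.val := by rw [hconj, hneg]
          _ = t ^ (-i + j).val := (pow_val_add t ht _ _).symm
          _ = t ^ (j - i).val := by congr 1; ring

@[simp] lemma dihedralLift_r (i : ZMod n) : dihedralLift t S ht hS hst (.r i) = t ^ i.val := rfl

@[simp] lemma dihedralLift_sr (i : ZMod n) :
    dihedralLift t S ht hS hst (.sr i) = S * t ^ i.val := rfl

lemma dihedralLift_r_one [Fact (1 < n)] : dihedralLift t S ht hS hst (.r 1) = t := by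
  rw [dihedralLift_r, ZMod.val_one, pow_one]

lemma dihedralLift_sr_zero : dihedralLift t S ht hS hst (.sr 0) = S := by
  rw [dihedralLift_sr, ZMod.val_zero, pow_zero, mul_one]

end Lift

section Ext
variable {n : ℕ} [NeZero n]

lemma r_eq_pow (i : ZMod n) : (DihedralGroup.r i : DihedralGroup n) = .r 1 ^ i.val := by
  rw [r_one_pow]
  congr 1
  simp [ZMod.natCast_val, ZMod.cast_id]

lemma sr_eq (i : ZMod n) : (DihedralGroup.sr i : DihedralGroup n) = .sr 0 * .r i := by
  rw [sr_mul_r, zero_add]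

lemma dihedral_hom_ext {H : Type*} [Monoid H] {f g : DihedralGroup n →* H}
    (h1 : f (.r 1) = g (.r 1)) (h2 : f (.sr 0) = g (.sr 0)) : f = g := by
  ext x
  cases x with
  | r i => rw [r_eq_pow, map_pow, map_pow, h1]
  | sr i => rw [sr_eq, map_mul, map_mul, h2, r_eq_pow, map_pow, map_pow, h1]

lemma prod_hom_ext {M N P : Type*} [Monoid M] [Monoid N] [Monoid P] {f g : M × N →* P}
    (h1 : ∀ m, f (m, 1) = g (m, 1)) (h2 : ∀ x, f (1, x) = g (1, x)) : f = g := by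
  ext ⟨m, x⟩
  have : (m, x) = ((m, (1 : N)) : M × N) * ((1 : M), x) := by
    rw [Prod.mk_mul_mk, mul_one, one_mul]
  rw [this, map_mul, map_mul, h1, h2]

lemma dd_hom_ext {H : Type*} [Group H]
    {f g : DihedralGroup n × DihedralGroup n →* H}
    (h1 : f (.r 1, 1) = g (.r 1, 1)) (h2 : f (.sr 0, 1) = g (.sr 0, 1))
    (h3 : f (1, .r 1) = g (1, .r 1)) (h4 : f (1, .sr 0) = g (1, .sr 0)) : f = g := by
  have e1 : f.comp (MonoidHom.inl _ _) = g.comp (MonoidHom.inl _ _) := dihedral_hom_ext h1 h2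
  have e2 : f.comp (MonoidHom.inr _ _) = g.comp (MonoidHom.inr _ _) := dihedral_hom_ext h3 h4
  exact prod_hom_ext (fun m => DFunLike.congr_fun e1 m) (fun x => DFunLike.congr_fun e2 x)

lemma dihedral_closure :
    Subgroup.closure ({.r 1, .sr 0} : Set (DihedralGroup n)) = ⊤ := by
  rw [eq_top_iff]
  rintro x -
  have h1 : (DihedralGroup.r 1 : DihedralGroup n) ∈
      Subgroup.closure ({.r 1, .sr 0} : Set (DihedralGroup n)) :=
    Subgroup.subset_closure (Set.mem_insert _ _)
  have h0 : (DihedralGroup.sr 0 : DihedralGroup n) ∈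
      Subgroup.closure ({.r 1, .sr 0} : Set (DihedralGroup n)) :=
    Subgroup.subset_closure (Set.mem_insert_of_mem _ rfl)
  cases x with
  | r i =>
    have := pow_mem h1 i.val
    rwa [← r_eq_pow] at this
  | sr i =>
    have := mul_mem h0 (pow_mem h1 i.val)
    rwa [← r_eq_pow, ← sr_eq] at this

end Ext
end Stmt12Aux



namespace Stmt12AuxB
open Stmt12Aux
open DihedralGroup

variable (s : ℕ)

/-- The outer-ish automorphism of `DihedralGroup s`: `r i ↦ r (-i)`, `sr i ↦ sr (-1-i)`. -/
def sigmaFun : DihedralGroup s → DihedralGroup s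
  | .r i => .r (-i)
  | .sr i => .sr (-1 - i)

lemma sigmaFun_invol : Function.Involutive (sigmaFun s) := by
  intro x
  cases x <;> simp only [sigmaFun] <;> congr 1 <;> ring

def sigma : DihedralGroup s ≃* DihedralGroup s where
  toFun := sigmaFun s
  invFun := sigmaFun s
  left_inv := sigmaFun_invol s
  right_inv := sigmaFun_invol s
  map_mul' x y := by
    cases x <;> cases y <;>
      simp only [r_mul_r, r_mul_sr, sr_mul_r, sr_mul_sr, sigmaFun] <;> congr 1 <;> ring

@[simp] lemma sigma_r (i : ZMod s) : sigma s (.r i) = .r (-i) := rfl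
@[simp] lemma sigma_sr (i : ZMod s) : sigma s (.sr i) = .sr (-1 - i) := rfl
@[simp] lemma sigma_sigma (x : DihedralGroup s) : sigma s (sigma s x) = x := sigmaFun_invol s x
@[simp] lemma sigma_one : sigma s 1 = 1 := map_one _

abbrev DD := DihedralGroup s × DihedralGroup s

/-- Rotation-by-90° automorphism of `D_s × D_s`. -/
def Rq : MulAut (DD s) :=
  { toFun := fun p => (sigma s p.2, p.1)
    invFun := fun p => (p.2, sigma s p.1)
    left_inv := by intro p; ext <;> simp
    right_inv := by intro p; ext <;> simp
    map_mul' := by intro p q; ext <;> simp }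

/-- Reflection automorphism of `D_s × D_s`. -/
def Sq : MulAut (DD s) :=
  { toFun := fun p => (sigma s p.1, p.2)
    invFun := fun p => (sigma s p.1, p.2)
    left_inv := by intro p; ext <;> simp
    right_inv := by intro p; ext <;> simp
    map_mul' := by intro p q; ext <;> simp }

@[simp] lemma Rq_apply (p : DD s) : Rq s p = (sigma s p.2, p.1) := rfl
@[simp] lemma Sq_apply (p : DD s) : Sq s p = (sigma s p.1, p.2) := rfl

lemma Rq_pow_four : Rq s ^ 4 = 1 := by
  have h4 : Rq s ^ 4 = Rq s * (Rq s * (Rq s * Rq s)) := by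
    rw [pow_succ, pow_succ, pow_succ, pow_one]
    group
  rw [h4]
  ext p <;> simp [MulAut.mul_apply, MulAut.one_apply]

lemma Sq_mul_self : Sq s * Sq s = 1 := by
  ext p <;> simp [MulAut.mul_apply, MulAut.one_apply]

lemma Sq_Rq_Sq : Sq s * Rq s * Sq s = (Rq s)⁻¹ := by
  have h : Rq s * (Sq s * Rq s * Sq s) = 1 := by
    ext p <;> simp [MulAut.mul_apply, MulAut.one_apply]
  exact eq_inv_of_mul_eq_one_right h

end Stmt12AuxB

namespace Stmt12AuxC

variable {G : Type*} [Group G] {A B C : G}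

lemma word4_ext {a b c d a' b' c' d' : G} (h : a*(b*(c*d)) = a'*(b'*(c'*d'))) :
    ∀ x : G, a*(b*(c*(d*x))) = a'*(b'*(c'*(d'*x))) := fun x => by
  calc a*(b*(c*(d*x))) = (a*(b*(c*d)))*x := by group
    _ = (a'*(b'*(c'*d')))*x := by rw [h]
    _ = a'*(b'*(c'*(d'*x))) := by group

section Words
variable (hA : A * A = 1) (hB : B * B = 1) (hC : C * C = 1)
  (hAB : (A * B) ^ 4 = 1) (hBC : (B * C) ^ 4 = 1) (hAC : (A * C) ^ 2 = 1)

include hA in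
lemma invA : A⁻¹ = A := inv_eq_of_mul_eq_one_right hA
include hB in
lemma invB : B⁻¹ = B := inv_eq_of_mul_eq_one_right hB
include hC in
lemma invC : C⁻¹ = C := inv_eq_of_mul_eq_one_right hC

include hA in
lemma sA : ∀ x : G, A * (A * x) = x := fun x => by rw [← mul_assoc, hA, one_mul]
include hB in
lemma sB : ∀ x : G, B * (B * x) = x := fun x => by rw [← mul_assoc, hB, one_mul]
include hC in
lemma sC : ∀ x : G, C * (C * x) = x := fun x => by rw [← mul_assoc, hC, one_mul]

include hA hC hAC in
lemma hCA : C * A = A * C := by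
  have h : (A * C) * (A * C) = 1 := by rw [← sq]; exact hAC
  have h2 := eq_inv_of_mul_eq_one_left h
  rw [mul_inv_rev, invA hA, invC hC] at h2
  exact h2.symm

include hA hC hAC in
lemma sCA : ∀ x : G, C * (A * x) = A * (C * x) := fun x => by
  rw [← mul_assoc, hCA hA hC hAC, mul_assoc]

include hA hB hAB in
lemma habab : A*(B*(A*B)) = B*(A*(B*A)) := by
  have h1 := hAB
  rw [show (4:ℕ) = 2+2 from rfl, pow_add] at h1
  have h2 := eq_inv_of_mul_eq_one_left h1
  have h3 : ((A*B)^2)⁻¹ = (B*A)^2 := by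
    rw [← inv_pow, mul_inv_rev, invA hA, invB hB]
  have h4 := h2.trans h3
  simpa [pow_two, mul_assoc] using h4

include hA hB hAB in
lemma shabab : ∀ x : G, A*(B*(A*(B*x))) = B*(A*(B*(A*x))) :=
  word4_ext (habab hA hB hAB)

include hB hC hBC in
lemma hcbcb : C*(B*(C*B)) = B*(C*(B*C)) := by
  have h1 := hBC
  rw [show (4:ℕ) = 2+2 from rfl, pow_add] at h1
  have h2 := eq_inv_of_mul_eq_one_left h1
  have h3 : ((B*C)^2)⁻¹ = (C*B)^2 := by
    rw [← inv_pow, mul_inv_rev, invB hB, invC hC]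
  have h4 := (h2.trans h3).symm
  simpa [pow_two, mul_assoc] using h4

include hB hC hBC in
lemma scbcb : ∀ x : G, C*(B*(C*(B*x))) = B*(C*(B*(C*x))) :=
  word4_ext (hcbcb hB hC hBC)

-- Notation: W = A*B*C*B (translation), Wp = B*A*B*C (the other translation), P = B*C*B.

include hA hB hC in
lemma LP2 : (B*C*B)*(B*C*B) = 1 := by
  simp [mul_assoc, sB hB, sC hC, hB, hC]

include hB in
lemma LWp : B*A*B*C = B * (A*B*C*B) * B⁻¹ := by
  simp [mul_assoc, sB hB, hB, mul_inv_rev, invB hB]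

include hA hB hC in
lemma L1 : (B*C*B) * (A*B*C*B) * (B*C*B) = (A*B*C*B)⁻¹ := by
  simp [mul_assoc, sA hA, sB hB, sC hC, hA, hB, hC, mul_inv_rev, invA hA, invB hB, invC hC]

include hA hB hC in
lemma L9 : A * (A*B*C*B) * A = (A*B*C*B)⁻¹ := by
  simp [mul_assoc, sA hA, sB hB, sC hC, hA, hB, hC, mul_inv_rev, invA hA, invB hB, invC hC]

include hA hB hC in
lemma L7 : (A*B) * (B*A*B*C) * (B*A) = (A*B*C*B)⁻¹ := by
  simp [mul_assoc, sA hA, sB hB, sC hC, hA, hB, hC, mul_inv_rev, invA hA, invB hB, invC hC]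

include hA hB hC in
lemma CWpC : C * (B*A*B*C) * C = (B*A*B*C)⁻¹ := by
  simp [mul_assoc, sA hA, sB hB, sC hC, hA, hB, hC, mul_inv_rev, invA hA, invB hB, invC hC]

include hA hB hC hAC in
lemma L10 : (A*B) * (B*C*B) * (B*A) = C := by
  simp [mul_assoc, sA hA, sB hB, sC hC, hA, hB, hC, hCA hA hC hAC]

include hA hB hC in
lemma L11 : (A*B) * C * (B*A) = (B*C*B) * ((A*B*C*B)⁻¹ * (A*B*C*B)⁻¹) := by
  simp [mul_assoc, sA hA, sB hB, sC hC, hA, hB, hC, mul_inv_rev, invA hA, invB hB, invC hC]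

include hA hB hC in
lemma L12 : A * (B*C*B) * A = (B*C*B) * ((A*B*C*B)⁻¹ * (A*B*C*B)⁻¹) := by
  simp [mul_assoc, sA hA, sB hB, sC hC, hA, hB, hC, mul_inv_rev, invA hA, invB hB, invC hC]

include hB hC hBC in
lemma L2 : C * (B*C*B) * C = B*C*B := by
  simp only [mul_assoc]
  rw [scbcb hB hC hBC]
  simp [mul_assoc, sC hC, hC]

include hA hB hC hBC hAC in
lemma L3 : C * (A*B*C*B) * C = A*B*C*B := by
  simp only [mul_assoc]
  rw [sCA hA hC hAC, scbcb hB hC hBC]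
  simp [mul_assoc, sC hC, hC]

include hA hB hC hBC hAC in
lemma L4 : (B*C*B) * (B*A*B*C) * (B*C*B) = B*A*B*C := by
  simp only [mul_assoc, sB hB]
  rw [sCA hA hC hAC, scbcb hB hC hBC]
  simp [mul_assoc, sB hB, sC hC, hB, hC]

include hA hB hC hAB hAC in
lemma L5 : A * (B*A*B*C) * A = B*A*B*C := by
  simp only [mul_assoc]
  rw [hCA hA hC hAC, shabab hA hB hAB]
  simp [mul_assoc, sA hA]

include hA hB hC hAB hAC in
lemma L6 : (A*B) * (A*B*C*B) * (B*A) = B*A*B*C := by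
  simp only [mul_assoc, sB hB]
  rw [hCA hA hC hAC, shabab hA hB hAB]
  simp [mul_assoc, sA hA]

include hA hB hC hAB hBC hAC in
lemma L8 : (A*B*C*B) * (B*A*B*C) = (B*A*B*C) * (A*B*C*B) := by
  simp only [mul_assoc, sB hB]
  rw [sCA hA hC hAC, sCA hA hC hAC, ← shabab hA hB hAB, hcbcb hB hC hBC]
  simp [mul_assoc, sB hB]

end Words
end Stmt12AuxC

namespace Stmt12Glue
open Stmt12Aux Stmt12AuxB Stmt12AuxC DihedralGroup SemidirectProduct

instance fact4 : Fact (1 < 4) := ⟨by norm_num⟩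

/-- The action of `D₄` on `D_s × D_s`. -/
def phi4 (s : ℕ) : DihedralGroup 4 →* MulAut (DihedralGroup s × DihedralGroup s) :=
  dihedralLift (Rq s) (Sq s) (Rq_pow_four s) (Sq_mul_self s) (Sq_Rq_Sq s)

variable (s : ℕ)

lemma phi4_r_one : phi4 s (.r 1) = Rq s := dihedralLift_r_one _ _ _ _ _
lemma phi4_sr_zero : phi4 s (.sr 0) = Sq s := dihedralLift_sr_zero _ _ _ _ _
lemma phi4_sr_one : phi4 s (.sr 1) = Sq s * Rq s := by
  rw [sr_eq (1 : ZMod 4), map_mul, phi4_sr_zero, phi4_r_one]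

lemma inr_mul_inl {N G : Type*} [Group N] [Group G] {φ : G →* MulAut N} (g : G) (n : N) :
    (inr g : N ⋊[φ] G) * inl n = inl (φ g n) * inr g := by
  ext <;> simp

/-- conjugation of a square by an involution -/
lemma conj_invol_sq {G : Type*} [Group G] {p w y : G} (hp : p * p = 1) (h : p * w * p = y) :
    p * w ^ 2 * p = y ^ 2 := by
  subst h
  rw [pow_two, pow_two]
  have e : (p * w * p) * (p * w * p) = p * w * ((p * p) * (w * p)) := by group
  rw [e, hp, one_mul]
  simp [mul_assoc]

lemma conj_sq {G : Type*} [Group G] {q w y : G} (h : q * w * q⁻¹ = y) :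
    q * w ^ 2 * q⁻¹ = y ^ 2 := by
  subst h
  rw [pow_two, pow_two]
  have e : (q * w * q⁻¹) * (q * w * q⁻¹) = q * w * ((q⁻¹ * q) * (w * q⁻¹)) := by group
  rw [e, inv_mul_cancel, one_mul]
  simp [mul_assoc]

lemma comm_of_conj {G : Type*} [Group G] {p w : G} (hp : p * p = 1) (h : p * w * p = w) :
    Commute p w := by
  show p * w = w * p
  calc p * w = p * w * (p * p) := by rw [hp, mul_one]
    _ = (p * w * p) * p := by group
    _ = w * p := by rw [h]

end Stmt12Glue

/-- The defining relators of the automorphism group of the torus map `{4,4}_{(2s,0)}`: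
the Coxeter relations of `[4,4]` together with `(ρ₀ρ₁ρ₂ρ₁)^{2s}`. -/
def relsStmt12 (s : ℕ) : Set (FreeGroup (Fin 3)) :=
  letI a := FreeGroup.of (0 : Fin 3)
  letI b := FreeGroup.of (1 : Fin 3)
  letI c := FreeGroup.of (2 : Fin 3)
  {a ^ 2, b ^ 2, c ^ 2, (a * b) ^ 4, (b * c) ^ 4, (a * c) ^ 2, (a * b * c * b) ^ (2 * s)}

namespace Stmt12Glue
open Stmt12Aux Stmt12AuxB Stmt12AuxC DihedralGroup SemidirectProduct

variable (s : ℕ) [NeZero s]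

abbrev MM := (DihedralGroup s × DihedralGroup s) ⋊[phi4 s] DihedralGroup 4

/-- images of the three generators -/
def Ffun : Fin 3 → MM s
  | 0 => inr (.sr 0)
  | 1 => inr (.sr 1)
  | 2 => inl (1, .sr 0)

@[simp] lemma Ffun_zero : Ffun s 0 = inr (.sr 0) := rfl
@[simp] lemma Ffun_one : Ffun s 1 = inr (.sr 1) := rfl
@[simp] lemma Ffun_two : Ffun s 2 = inl (1, .sr 0) := rfl

lemma c_ab : (inr (.sr 0) : MM s) * inr (.sr 1) = inr (.r 1) := by
  rw [← map_mul, sr_mul_sr]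
  norm_num

lemma sr_sq_one {n : ℕ} (i : ZMod n) : (DihedralGroup.sr i) ^ 2 = 1 := by
  rw [pow_two, sr_mul_sr, sub_self, ← one_def]

lemma c1 : (inr (.sr 0) : MM s) ^ 2 = 1 := by
  rw [← map_pow, sr_sq_one, map_one]

lemma c2 : (inr (.sr 1) : MM s) ^ 2 = 1 := by
  rw [← map_pow, sr_sq_one, map_one]

lemma c3 : (inl ((1 : DihedralGroup s), (DihedralGroup.sr 0 : DihedralGroup s)) : MM s) ^ 2
    = 1 := by
  rw [← map_pow, Prod.pow_mk, sr_sq_one, one_pow, Prod.mk_one_one, map_one]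

lemma c4 : ((inr (.sr 0) : MM s) * inr (.sr 1)) ^ 4 = 1 := by
  rw [c_ab, ← map_pow, r_one_pow]
  have h : ((4 : ℕ) : ZMod 4) = 0 := by decide
  rw [h, ← one_def, map_one]

lemma c5mid : ((inr (.sr 1) : MM s) * inl (1, .sr 0)) ^ 2 = inl (.sr 0, .sr 0) := by
  ext <;>
    simp [pow_two, phi4_sr_one, MulAut.mul_apply, Prod.mk_mul_mk, sr_mul_sr, r_mul_sr,
      sr_mul_r, r_mul_r, sub_zero, sub_self, ← one_def]

lemma pow_four_eq {H : Type*} [Group H] (x : H) : x ^ 4 = (x ^ 2) ^ 2 := by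
  rw [← pow_mul]

lemma c5 : ((inr (.sr 1) : MM s) * inl (1, .sr 0)) ^ 4 = 1 := by
  rw [pow_four_eq, c5mid, ← map_pow, Prod.pow_mk, sr_sq_one, Prod.mk_one_one, map_one]

lemma c6 : ((inr (.sr 0) : MM s) * inl (1, .sr 0)) ^ 2 = 1 := by
  ext <;>
    simp [pow_two, phi4_sr_zero, Prod.mk_mul_mk, sr_mul_sr, sub_zero, ← one_def]

lemma cWM2 : ((inr (.sr 0) : MM s) * inr (.sr 1) * inl (1, .sr 0) * inr (.sr 1)) ^ 2
    = inl (.r 1, 1) := by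
  ext <;>
    simp [pow_two, phi4_sr_zero, phi4_sr_one, phi4_r_one, MulAut.mul_apply, Prod.mk_mul_mk,
      sr_mul_sr, r_mul_sr, sr_mul_r, r_mul_r, sub_zero, ← one_def]

lemma c7 : ((inr (.sr 0) : MM s) * inr (.sr 1) * inl (1, .sr 0) * inr (.sr 1)) ^ (2 * s)
    = 1 := by
  rw [pow_mul, cWM2, ← map_pow]
  have : ((DihedralGroup.r 1 : DihedralGroup s), (1 : DihedralGroup s)) ^ s = 1 := by
    rw [Prod.pow_mk, r_one_pow, ZMod.natCast_self, ← one_def, one_pow, Prod.mk_one_one]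
  rw [this, map_one]

lemma cP : (inr (.sr 1) : MM s) * inl (1, .sr 0) * inr (.sr 1) = inl (.sr 0, 1) := by
  ext <;>
    simp [phi4_sr_one, MulAut.mul_apply, Prod.mk_mul_mk, sr_mul_sr, r_mul_sr,
      sr_mul_r, r_mul_r, sub_zero, sub_self, ← one_def]

end Stmt12Glue

namespace Stmt12Glue
open Stmt12Aux Stmt12AuxB Stmt12AuxC DihedralGroup SemidirectProduct

theorem mainEquiv (s : ℕ) (hs : 2 ≤ s) :
    Nonempty (PresentedGroup (relsStmt12 s) ≃*
      (DihedralGroup s × DihedralGroup s) ⋊[phi4 s] DihedralGroup 4) := by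
  haveI : NeZero s := ⟨by omega⟩
  haveI : Fact (1 < s) := ⟨hs⟩
  set A : PresentedGroup (relsStmt12 s) := .of 0 with hAdef
  set B : PresentedGroup (relsStmt12 s) := .of 1 with hBdef
  set C : PresentedGroup (relsStmt12 s) := .of 2 with hCdef
  have relOne : ∀ r ∈ relsStmt12 s, PresentedGroup.mk (relsStmt12 s) r = 1 := fun r hr =>
    (QuotientGroup.eq_one_iff _).mpr (Subgroup.subset_normalClosure hr)
  have m1 : (FreeGroup.of (0 : Fin 3)) ^ 2 ∈ relsStmt12 s := Set.mem_insert _ _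
  have m2 : (FreeGroup.of (1 : Fin 3)) ^ 2 ∈ relsStmt12 s :=
    Set.mem_insert_of_mem _ (Set.mem_insert _ _)
  have m3 : (FreeGroup.of (2 : Fin 3)) ^ 2 ∈ relsStmt12 s :=
    Set.mem_insert_of_mem _ (Set.mem_insert_of_mem _ (Set.mem_insert _ _))
  have m4 : (FreeGroup.of (0 : Fin 3) * FreeGroup.of 1) ^ 4 ∈ relsStmt12 s :=
    Set.mem_insert_of_mem _ (Set.mem_insert_of_mem _ (Set.mem_insert_of_mem _
      (Set.mem_insert _ _)))
  have m5 : (FreeGroup.of (1 : Fin 3) * FreeGroup.of 2) ^ 4 ∈ relsStmt12 s :=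
    Set.mem_insert_of_mem _ (Set.mem_insert_of_mem _ (Set.mem_insert_of_mem _
      (Set.mem_insert_of_mem _ (Set.mem_insert _ _))))
  have m6 : (FreeGroup.of (0 : Fin 3) * FreeGroup.of 2) ^ 2 ∈ relsStmt12 s :=
    Set.mem_insert_of_mem _ (Set.mem_insert_of_mem _ (Set.mem_insert_of_mem _
      (Set.mem_insert_of_mem _ (Set.mem_insert_of_mem _ (Set.mem_insert _ _)))))
  have m7 : (FreeGroup.of (0 : Fin 3) * FreeGroup.of 1 * FreeGroup.of 2 * FreeGroup.of 1)
      ^ (2 * s) ∈ relsStmt12 s :=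
    Set.mem_insert_of_mem _ (Set.mem_insert_of_mem _ (Set.mem_insert_of_mem _
      (Set.mem_insert_of_mem _ (Set.mem_insert_of_mem _ (Set.mem_insert_of_mem _ rfl)))))
  have hA : A * A = 1 := by
    have := relOne _ m1; rw [map_pow, pow_two] at this; exact this
  have hB : B * B = 1 := by
    have := relOne _ m2; rw [map_pow, pow_two] at this; exact this
  have hC : C * C = 1 := by
    have := relOne _ m3; rw [map_pow, pow_two] at this; exact this
  have hAB : (A * B) ^ 4 = 1 := by
    have := relOne _ m4; rw [map_pow, map_mul] at this; exact this
  have hBC : (B * C) ^ 4 = 1 := by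
    have := relOne _ m5; rw [map_pow, map_mul] at this; exact this
  have hAC : (A * C) ^ 2 = 1 := by
    have := relOne _ m6; rw [map_pow, map_mul] at this; exact this
  have hW2s : (A * B * C * B) ^ (2 * s) = 1 := by
    have := relOne _ m7; rw [map_pow, map_mul, map_mul, map_mul] at this; exact this
  -- shorthands
  set W : PresentedGroup (relsStmt12 s) := A * B * C * B with hWdef
  set Wp : PresentedGroup (relsStmt12 s) := B * A * B * C with hWpdef
  set P : PresentedGroup (relsStmt12 s) := B * C * B with hPdef
  set U : PresentedGroup (relsStmt12 s) := W ^ 2 with hUdef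
  set V : PresentedGroup (relsStmt12 s) := Wp ^ 2 with hVdef
  have hBAinv : (A * B)⁻¹ = B * A := by rw [mul_inv_rev, invA hA, invB hB]
  have hUs : U ^ s = 1 := by rw [hUdef, ← pow_mul]; exact hW2s
  have hP2 : P * P = 1 := LP2 hA hB hC
  have hWpconj : Wp = B * W * B⁻¹ := LWp hB
  have hVs : V ^ s = 1 := by
    rw [hVdef, ← pow_mul, hWpconj, conj_pow, hW2s, mul_one, mul_inv_cancel]
  have hUinv : U⁻¹ = W⁻¹ * W⁻¹ := by rw [hUdef, pow_two, mul_inv_rev]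
  have hPUP : P * U * P = U⁻¹ := by
    have h := conj_invol_sq hP2 (L1 hA hB hC)
    rwa [inv_pow] at h
  have hCVC : C * V * C = V⁻¹ := by
    have h := conj_invol_sq hC (CWpC hA hB hC)
    rwa [inv_pow] at h
  have hAUA : A * U * A = U⁻¹ := by
    have h := conj_invol_sq hA (L9 hA hB hC)
    rwa [inv_pow] at h
  have hAABA : A * (A * B) * A = (A * B)⁻¹ := by
    rw [hBAinv, ← mul_assoc, hA, one_mul]
  -- commutation relations
  have cWWp : Commute W Wp := L8 hA hB hC hAB hBC hAC
  have cUV : Commute U V := cWWp.pow_pow 2 2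
  have cCW : Commute C W := comm_of_conj hC (L3 hA hB hC hBC hAC)
  have cUC : Commute U C := (cCW.pow_right 2).symm
  have cPC : Commute P C := (comm_of_conj hC (L2 hB hC hBC)).symm
  have cPWp : Commute P Wp := comm_of_conj hP2 (L4 hA hB hC hBC hAC)
  have cPV : Commute P V := cPWp.pow_right 2
  have cAWp : Commute A Wp := comm_of_conj hA (L5 hA hB hC hAB hAC)
  have cAV : Commute A V := cAWp.pow_right 2
  have cAC : Commute A C := (hCA hA hC hAC).symm
  -- the lifted homomorphisms
  set gx := dihedralLift U P hUs hP2 hPUP with hgx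
  set gy := dihedralLift V C hVs hC hCVC with hgy
  have hcomm : ∀ m n : DihedralGroup s, Commute (gx m) (gy n) := by
    intro m n
    cases m with
    | r i =>
      cases n with
      | r j =>
        simp only [hgx, hgy, dihedralLift_r]
        exact cUV.pow_pow _ _
      | sr j =>
        simp only [hgx, hgy, dihedralLift_r, dihedralLift_sr]
        exact Commute.mul_right (cUC.pow_left _) (cUV.pow_pow _ _)
    | sr i =>
      cases n with
      | r j =>
        simp only [hgx, hgy, dihedralLift_r, dihedralLift_sr]
        exact Commute.mul_left (cPV.pow_right _) (cUV.pow_pow _ _)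
      | sr j =>
        simp only [hgx, hgy, dihedralLift_sr]
        exact Commute.mul_left (Commute.mul_right cPC (cPV.pow_right _))
          (Commute.mul_right (cUC.pow_left _) (cUV.pow_pow _ _))
  set g1 := gx.noncommCoprod gy hcomm with hg1
  set g2 := dihedralLift (A * B) A hAB hA hAABA with hg2
  have g1app : ∀ x y : DihedralGroup s, g1 (x, y) = gx x * gy y := fun x y => rfl
  have gx_r1 : gx (.r 1) = U := dihedralLift_r_one _ _ _ _ _
  have gx_sr0 : gx (.sr 0) = P := dihedralLift_sr_zero _ _ _ _ _
  have gy_r1 : gy (.r 1) = V := dihedralLift_r_one _ _ _ _ _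
  have gy_sr0 : gy (.sr 0) = C := dihedralLift_sr_zero _ _ _ _ _
  have g2_r1 : g2 (.r 1) = A * B := dihedralLift_r_one _ _ _ _ _
  have g2_sr0 : g2 (.sr 0) = A := dihedralLift_sr_zero _ _ _ _ _
  -- values of g1 on the four generators of the product
  have hrneg : (DihedralGroup.r (-1) : DihedralGroup s) = (.r 1)⁻¹ := by
    refine eq_inv_of_mul_eq_one_left ?_
    rw [r_mul_r, neg_add_cancel, ← one_def]
  have hsrneg : (DihedralGroup.sr (-1) : DihedralGroup s) = .sr 0 * (.r 1)⁻¹ := by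
    rw [← hrneg, sr_mul_r, zero_add]
  have g1a : g1 (.r 1, 1) = U := by rw [g1app, gx_r1, map_one, mul_one]
  have g1b : g1 (.sr 0, 1) = P := by rw [g1app, gx_sr0, map_one, mul_one]
  have g1c : g1 (1, .r 1) = V := by rw [g1app, gy_r1, map_one, one_mul]
  have g1d : g1 (1, .sr 0) = C := by rw [g1app, gy_sr0, map_one, one_mul]
  have g1a' : g1 (.r (-1), 1) = U⁻¹ := by
    rw [g1app, map_one, mul_one, hrneg, map_inv, gx_r1]
  have g1b' : g1 (.sr (-1), 1) = P * U⁻¹ := by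
    rw [g1app, map_one, mul_one, hsrneg, map_mul, map_inv, gx_r1, gx_sr0]
  -- conjugation values
  have hconjU : A * B * U * (A * B)⁻¹ = V := by
    have h6 : A * B * W * (A * B)⁻¹ = Wp := by rw [hBAinv]; exact L6 hA hB hC hAB hAC
    exact conj_sq h6
  have hconjV : A * B * V * (A * B)⁻¹ = U⁻¹ := by
    have h7 : A * B * Wp * (A * B)⁻¹ = W⁻¹ := by rw [hBAinv]; exact L7 hA hB hC
    have := conj_sq h7
    rwa [inv_pow, ← hUdef] at this
  have hconjP : A * B * P * (A * B)⁻¹ = C := by rw [hBAinv]; exact L10 hA hB hC hAC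
  have hconjC : A * B * C * (A * B)⁻¹ = P * U⁻¹ := by
    rw [hBAinv, L11 hA hB hC, hUinv]
  have hAPA : A * P * A = P * U⁻¹ := by rw [L12 hA hB hC, hUinv]
  have hAVA : A * V * A = V := by
    rw [cAV.eq, mul_assoc, hA, mul_one]
  have hACA : A * C * A = C := by
    rw [cAC.eq, mul_assoc, hA, mul_one]
  -- compatibility of g1, g2 with the action
  have Kgen : ∀ h0 : DihedralGroup 4,
      g1 ((phi4 s h0) (.r 1, 1)) = g2 h0 * g1 (.r 1, 1) * (g2 h0)⁻¹ →
      g1 ((phi4 s h0) (.sr 0, 1)) = g2 h0 * g1 (.sr 0, 1) * (g2 h0)⁻¹ →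
      g1 ((phi4 s h0) (1, .r 1)) = g2 h0 * g1 (1, .r 1) * (g2 h0)⁻¹ →
      g1 ((phi4 s h0) (1, .sr 0)) = g2 h0 * g1 (1, .sr 0) * (g2 h0)⁻¹ →
      ∀ n, g1 (phi4 s h0 n) = g2 h0 * g1 n * (g2 h0)⁻¹ := by
    intro h0 e1 e2 e3 e4 n
    have hhom : g1.comp ((phi4 s h0).toMonoidHom) =
        (MulAut.conj (g2 h0)).toMonoidHom.comp g1 := by
      refine dd_hom_ext ?_ ?_ ?_ ?_ <;>
        simp only [MonoidHom.comp_apply, MulEquiv.coe_toMonoidHom, MulAut.conj_apply]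
      · exact e1
      · exact e2
      · exact e3
      · exact e4
    have := DFunLike.congr_fun hhom n
    simpa [MulAut.conj_apply] using this
  have Kr1 : ∀ n, g1 (phi4 s (.r 1) n) = g2 (.r 1) * g1 n * (g2 (.r 1))⁻¹ := by
    refine Kgen _ ?_ ?_ ?_ ?_ <;>
      rw [phi4_r_one, g2_r1] <;> rw [Rq_apply]
    · -- (r1,1) ↦ (σ 1, r 1) = (1, r1)
      simp only [sigma_one]
      rw [g1c, g1a, hconjU]
    · simp only [sigma_one]
      rw [g1d, g1b, hconjP]
    · simp only [sigma_r]
      rw [g1a', g1c, hconjV]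
    · simp only [sigma_sr, sub_zero]
      rw [g1b', g1d, hconjC]
  have Ksr0 : ∀ n, g1 (phi4 s (.sr 0) n) = g2 (.sr 0) * g1 n * (g2 (.sr 0))⁻¹ := by
    refine Kgen _ ?_ ?_ ?_ ?_ <;>
      rw [phi4_sr_zero, g2_sr0, invA hA] <;> rw [Sq_apply]
    · simp only [sigma_r]
      rw [g1a', g1a, hAUA]
    · simp only [sigma_sr, sub_zero]
      rw [g1b', g1b, hAPA]
    · simp only [sigma_one]
      rw [g1c]
      exact hAVA.symm
    · simp only [sigma_one]
      rw [g1d]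
      exact hACA.symm
  have key : ∀ h : DihedralGroup 4, ∀ n,
      g1 (phi4 s h n) = g2 h * g1 n * (g2 h)⁻¹ := by
    intro h
    have hmem : h ∈ Subgroup.closure ({.r 1, .sr 0} : Set (DihedralGroup 4)) := by
      rw [dihedral_closure]; trivial
    refine Subgroup.closure_induction ?_ ?_ ?_ ?_ hmem
    · rintro x (rfl | rfl)
      · exact Kr1
      · exact Ksr0
    · intro n; simp
    · intro x y _ _ kx ky n
      rw [map_mul, MulAut.mul_apply, kx, ky, map_mul, mul_inv_rev]
      group
    · intro x _ kx n
      have h1 := kx ((phi4 s x)⁻¹ n)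
      rw [MulAut.apply_inv_self] at h1
      have e2 : g1 ((phi4 s x)⁻¹ n) = (g2 x)⁻¹ * g1 n * g2 x := by rw [h1]; group
      rw [map_inv, map_inv, e2, inv_inv]
  have compat : ∀ h : DihedralGroup 4,
      g1.comp ((phi4 s h).toMonoidHom) = (MulAut.conj (g2 h)).toMonoidHom.comp g1 := by
    intro h
    ext n
    simp only [MonoidHom.comp_apply, MulEquiv.coe_toMonoidHom, MulAut.conj_apply]
    exact key h n
  set glift := SemidirectProduct.lift g1 g2 compat with hglift
  -- the homomorphism from the presented group
  have hFrels : ∀ r ∈ relsStmt12 s, FreeGroup.lift (Ffun s) r = 1 := by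
    intro r hr
    simp only [relsStmt12, Set.mem_insert_iff, Set.mem_singleton_iff] at hr
    rcases hr with rfl | rfl | rfl | rfl | rfl | rfl | rfl <;>
      simp only [map_pow, map_mul, FreeGroup.lift_apply_of, Ffun_zero, Ffun_one, Ffun_two]
    · exact c1 s
    · exact c2 s
    · exact c3 s
    · exact c4 s
    · exact c5 s
    · exact c6 s
    · exact c7 s
  set f := PresentedGroup.toGroup hFrels with hf
  have fA : f A = inr (.sr 0) := PresentedGroup.toGroup.of hFrels
  have fB : f B = inr (.sr 1) := PresentedGroup.toGroup.of hFrels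
  have fC : f C = inl (1, .sr 0) := PresentedGroup.toGroup.of hFrels
  have fW : f W = inr (.sr 0) * inr (.sr 1) * inl (1, .sr 0) * inr (.sr 1) := by
    rw [hWdef, map_mul, map_mul, map_mul, fA, fB, fC]
  have fU : f U = inl (.r 1, 1) := by
    rw [hUdef, map_pow, fW, cWM2]
  have fP : f P = inl (.sr 0, 1) := by
    rw [hPdef, map_mul, map_mul, fB, fC]
    exact cP s
  have fAB : f (A * B) = inr (.r 1) := by rw [map_mul, fA, fB, c_ab]
  have fV : f V = inl (1, .r 1) := by
    rw [← hconjU, map_mul, map_mul, map_inv, fAB, fU, ← map_inv, ← inl_aut, phi4_r_one,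
      Rq_apply]
    simp only [sigma_one]
  -- glift ∘ f = id
  have hcomp1 : glift.comp f = MonoidHom.id _ := by
    apply PresentedGroup.ext
    intro i
    fin_cases i
    · show glift (f A) = A
      rw [fA, SemidirectProduct.lift_inr, g2_sr0]
    · show glift (f B) = B
      rw [fB, SemidirectProduct.lift_inr, sr_eq (1 : ZMod 4), map_mul, g2_sr0, g2_r1,
        ← mul_assoc, hA, one_mul]
    · show glift (f C) = C
      rw [fC, SemidirectProduct.lift_inl, g1d]
  -- f ∘ glift = id
  have hcomp2 : f.comp glift = MonoidHom.id _ := by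
    apply SemidirectProduct.hom_ext
    · refine dd_hom_ext ?_ ?_ ?_ ?_ <;>
        simp only [MonoidHom.comp_apply, MonoidHom.id_apply]
      · rw [hglift, SemidirectProduct.lift_inl, g1a, fU]
      · rw [hglift, SemidirectProduct.lift_inl, g1b, fP]
      · rw [hglift, SemidirectProduct.lift_inl, g1c, fV]
      · rw [hglift, SemidirectProduct.lift_inl, g1d, fC]
    · refine dihedral_hom_ext ?_ ?_ <;>
        simp only [MonoidHom.comp_apply, MonoidHom.id_apply]
      · rw [hglift, SemidirectProduct.lift_inr, g2_r1, fAB]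
      · rw [hglift, SemidirectProduct.lift_inr, g2_sr0, fA]
  exact ⟨{ toFun := f, invFun := glift,
           left_inv := fun x => by simpa using DFunLike.congr_fun hcomp1 x,
           right_inv := fun y => by simpa using DFunLike.congr_fun hcomp2 y,
           map_mul' := map_mul f }⟩

end Stmt12Glue

namespace Stmt12Glue

lemma cardMM (s : ℕ) :
    Nat.card ((DihedralGroup s × DihedralGroup s) ⋊[phi4 s] DihedralGroup 4) = 32 * s ^ 2 := by
  have h1 : Nat.card ((DihedralGroup s × DihedralGroup s) ⋊[phi4 s] DihedralGroup 4)
      = Nat.card ((DihedralGroup s × DihedralGroup s) × DihedralGroup 4) :=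
    Nat.card_congr ⟨fun x => (x.left, x.right), fun p => ⟨p.1, p.2⟩,
      fun _ => rfl, fun _ => rfl⟩
  rw [h1, Nat.card_prod, Nat.card_prod, DihedralGroup.nat_card, DihedralGroup.nat_card]
  ring

end Stmt12Glue

/-- The automorphism group of the torus map `{4,4}_{(2s,0)}` is isomorphic to
`(D_s × D_s) ⋊ D₄` and has order `32s²`. -/
theorem stmt12 (s : ℕ) (hs : 2 ≤ s) :
    (∃ φ : DihedralGroup 4 →* MulAut (DihedralGroup s × DihedralGroup s),
      Nonempty (PresentedGroup (relsStmt12 s) ≃*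
        (DihedralGroup s × DihedralGroup s) ⋊[φ] DihedralGroup 4)) ∧
    Nat.card (PresentedGroup (relsStmt12 s)) = 32 * s ^ 2 := by
  obtain ⟨e⟩ := Stmt12Glue.mainEquiv s hs
  refine ⟨⟨Stmt12Glue.phi4 s, ⟨e⟩⟩, ?_⟩
  rw [Nat.card_congr e.toEquiv, Stmt12Glue.cardMM]
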